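/- For F(t,x₀,x₁,x₂) = 24 x₂³/(−3+√(9−2x₁x₂))³ + 12 x₁x₂⁴/(−3+√(9−2x₁x₂))⁴ (on the open set where 9 − 2x₁x₂ > 0 and −3+√(9−2x₁x₂) ≠ 0), the W\u00fcnschmann invariant W vanishes identically. -/

import Mathlib

noncomputable section

/-- ℝ⁴ with coordinates (t, x₀, x₁, x₂). -/
abbrev R4 := ℝ × ℝ × ℝ × ℝ

/-- The total derivative vector field X_F = ∂_t + x₁∂_{x₀} + x₂∂_{x₁} + F∂_{x₂}. -/
def XFvec (F : R4 → ℝ) (p : R4) : R4 := (1, p.2.2.1, p.2.2.2, F p)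

/-- X_F acting as a derivation on functions. -/
def XF (F : R4 → ℝ) (f : R4 → ℝ) (p : R4) : ℝ := fderiv ℝ f p (XFvec F p)

/-- Directional (partial) derivative in the direction `v`. -/
def pd (v : R4) (f : R4 → ℝ) (p : R4) : ℝ := fderiv ℝ f p v

def e0 : R4 := (0, 1, 0, 0)  -- ∂_{x₀}
def e1 : R4 := (0, 0, 1, 0)  -- ∂_{x₁}
def e2 : R4 := (0, 0, 0, 1)  -- ∂_{x₂}

/-- K₁ = ∂_{x₁}F − X_F(∂_{x₂}F) + (1/3)(∂_{x₂}F)². -/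
def K1 (F : R4 → ℝ) : R4 → ℝ := fun p =>
  pd e1 F p - XF F (pd e2 F) p + (1/3) * (pd e2 F p)^2

/-- K₀ = ∂_{x₀}F − X_F(∂_{x₁}F) + (1/3)∂_{x₁}F∂_{x₂}F + (2/3)X_F²(∂_{x₂}F)
        − (2/3)X_F(∂_{x₂}F)∂_{x₂}F + (2/27)(∂_{x₂}F)³. -/
def K0 (F : R4 → ℝ) : R4 → ℝ := fun p =>
  pd e0 F p - XF F (pd e1 F) p + (1/3) * pd e1 F p * pd e2 F p
    + (2/3) * XF F (XF F (pd e2 F)) p - (2/3) * XF F (pd e2 F) p * pd e2 F p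
    + (2/27) * (pd e2 F p)^3

/-- The Wünschmann invariant. -/
def Wun (F : R4 → ℝ) : R4 → ℝ := fun p =>
  pd e0 F p - (1/2) * XF F (pd e1 F) p + (1/3) * pd e1 F p * pd e2 F p
    + (1/6) * XF F (XF F (pd e2 F)) p - (1/3) * XF F (pd e2 F) p * pd e2 F p
    + (2/27) * (pd e2 F p)^3

/-- The Cartan invariant C = X_F²(∂²_{x₂}F) − X_F(∂_{x₁}∂_{x₂}F) + ∂_{x₀}∂_{x₂}F. -/
def CartanC (F : R4 → ℝ) : R4 → ℝ := fun p =>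
  XF F (XF F (pd e2 (pd e2 F))) p - XF F (pd e1 (pd e2 F)) p + pd e0 (pd e2 F) p

/-- The dKP-type example: F = 24x₂³/(−3+√(9−2x₁x₂))³ + 12x₁x₂⁴/(−3+√(9−2x₁x₂))⁴. -/
def FdKP : R4 → ℝ := fun q =>
  24 * q.2.2.2^3 / (-3 + Real.sqrt (9 - 2 * q.2.2.1 * q.2.2.2))^3
    + 12 * q.2.2.1 * q.2.2.2^4 / (-3 + Real.sqrt (9 - 2 * q.2.2.1 * q.2.2.2))^4

namespace WdKPaux

def ℓx : R4 →L[ℝ] ℝ :=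
  (ContinuousLinearMap.fst ℝ ℝ ℝ).comp
    ((ContinuousLinearMap.snd ℝ ℝ (ℝ × ℝ)).comp (ContinuousLinearMap.snd ℝ ℝ (ℝ × ℝ × ℝ)))
def ℓy : R4 →L[ℝ] ℝ :=
  (ContinuousLinearMap.snd ℝ ℝ ℝ).comp
    ((ContinuousLinearMap.snd ℝ ℝ (ℝ × ℝ)).comp (ContinuousLinearMap.snd ℝ ℝ (ℝ × ℝ × ℝ)))
def sf (p : R4) : ℝ := Real.sqrt (9 - 2*p.2.2.1*p.2.2.2)

lemma Hpow {f : R4 → ℝ} {f' : R4 →L[ℝ] ℝ} {p : R4} (h : HasFDerivAt f f' p) (n : ℕ) :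
    HasFDerivAt (fun q => f q ^ n) (((n:ℝ) * f p ^ (n-1)) • f') p :=
  (hasDerivAt_pow n (f p)).comp_hasFDerivAt p h
lemma Hinv {f : R4 → ℝ} {f' : R4 →L[ℝ] ℝ} {p : R4} (h : HasFDerivAt f f' p) (hne : f p ≠ 0) :
    HasFDerivAt (fun q => (f q)⁻¹) ((-(f p ^ 2)⁻¹) • f') p :=
  (hasDerivAt_inv hne).comp_hasFDerivAt p h

lemma hasFDerivAt_sf (p : R4) (h : (9:ℝ) - 2*p.2.2.1*p.2.2.2 ≠ 0) :
    HasFDerivAt sf ((1 / (2*sf p)) • -((2:ℝ) • (p.2.2.1 • ℓy + p.2.2.2 • ℓx))) p := by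
  have h1 : HasFDerivAt (fun q : R4 => q.2.2.1*q.2.2.2)
      (p.2.2.1 • ℓy + p.2.2.2 • ℓx) p := ℓx.hasFDerivAt.mul ℓy.hasFDerivAt
  have hu := (h1.const_mul (2:ℝ)).const_sub 9
  simp only [← mul_assoc] at hu
  exact (Real.hasDerivAt_sqrt h).comp_hasFDerivAt p hu

def Fn (q : R4) : ℝ := -6 * q.2.2.2^3 * (sf q - 1) * ((sf q - 3)^3)⁻¹
def F1n (q : R4) : ℝ := -12 * q.2.2.2^4 * ((sf q - 3)^4)⁻¹
def F2n (q : R4) : ℝ := -12 * q.2.2.2^2 * ((sf q - 3)^2)⁻¹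
def An (q : R4) : ℝ := -4 * F1n q

def Udom : Set R4 := {q | 0 < 9 - 2*q.2.2.1*q.2.2.2 ∧ q.2.2.1*q.2.2.2 ≠ 0}

lemma isOpen_Udom : IsOpen Udom := by
  have h : Udom = (fun q : R4 => q.2.2.1*q.2.2.2) ⁻¹' (Set.Iio (9/2:ℝ) ∩ {(0:ℝ)}ᶜ) := by
    ext q
    simp only [Udom, Set.mem_setOf_eq, Set.mem_preimage, Set.mem_inter_iff, Set.mem_Iio,
      Set.mem_compl_iff, Set.mem_singleton_iff]
    constructor
    · rintro ⟨a, b⟩; exact ⟨by linarith, b⟩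
    · rintro ⟨a, b⟩; exact ⟨by linarith, b⟩
  rw [h]
  exact (isOpen_Iio.inter isOpen_compl_singleton).preimage (by fun_prop)

section facts
variable {p : R4} (hp : p ∈ Udom)
include hp

lemma sf_pos : 0 < sf p := Real.sqrt_pos.2 hp.1
lemma sf_sq : sf p ^ 2 = 9 - 2*p.2.2.1*p.2.2.2 := Real.sq_sqrt hp.1.le
lemma sf_ne3 : sf p - 3 ≠ 0 := by
  intro h
  have h2 := sf_sq hp
  have h3 : sf p = 3 := by linarith
  rw [h3] at h2
  exact hp.2 (by nlinarith)
lemma y_ne : p.2.2.2 ≠ 0 := fun h => hp.2 (by rw [h]; ring)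
lemma x_el : p.2.2.1 = (9 - sf p ^ 2) / (2 * p.2.2.2) := by
  have h2 := sf_sq hp
  field_simp [y_ne hp]
  linarith

lemma FdKP_eq : FdKP p = Fn p := by
  have h2 := sf_sq hp
  have h3 := sf_ne3 hp
  have h3' : (-3 : ℝ) + sf p ≠ 0 := fun h => h3 (by linarith)
  unfold FdKP Fn
  rw [show Real.sqrt (9 - 2*p.2.2.1*p.2.2.2) = sf p from rfl]
  field_simp
  linear_combination (6*p.2.2.2^3*(sf p - 3)^3) * h2

/-- derivative of Fn -/
lemma dFn : DifferentiableAt ℝ Fn p ∧ ∀ v : R4,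
    fderiv ℝ Fn p v = F1n p * v.2.2.1 + F2n p * v.2.2.2 := by
  have hne : (9:ℝ) - 2*p.2.2.1*p.2.2.2 ≠ 0 := ne_of_gt hp.1
  have hs0 := (sf_pos hp).ne'
  have h3 := sf_ne3 hp
  have hy := y_ne hp
  have hs := hasFDerivAt_sf p hne
  have hd : HasFDerivAt Fn _ p :=
    (((Hpow ℓy.hasFDerivAt 3).const_mul (-6)).mul (hs.sub_const 1)).mul
      (Hinv (Hpow (hs.sub_const 3) 3) (pow_ne_zero 3 h3))
  refine ⟨hd.differentiableAt, fun v => ?_⟩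
  rw [hd.fderiv]
  simp only [ContinuousLinearMap.add_apply, ContinuousLinearMap.smul_apply,
    ContinuousLinearMap.coe_smul', ContinuousLinearMap.neg_apply, ContinuousLinearMap.coe_comp',
    Function.comp_apply, ContinuousLinearMap.coe_fst', ContinuousLinearMap.coe_snd',
    Pi.smul_apply, Pi.neg_apply, Pi.mul_apply, smul_eq_mul, ℓx, ℓy]
  rw [x_el hp]
  unfold F1n F2n
  field_simp
  ring

/-- derivative of F1n -/
lemma dF1n : DifferentiableAt ℝ F1n p ∧ ∀ v : R4,
    fderiv ℝ F1n p v = (-48 * p.2.2.2^5 / (sf p * (sf p - 3)^5)) * v.2.2.1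
      + (-24 * p.2.2.2^3 / (sf p * (sf p - 3)^3)) * v.2.2.2 := by
  have hne : (9:ℝ) - 2*p.2.2.1*p.2.2.2 ≠ 0 := ne_of_gt hp.1
  have hs0 := (sf_pos hp).ne'
  have h3 := sf_ne3 hp
  have hy := y_ne hp
  have hs := hasFDerivAt_sf p hne
  have hd : HasFDerivAt F1n _ p :=
    ((Hpow ℓy.hasFDerivAt 4).const_mul (-12)).mul
      (Hinv (Hpow (hs.sub_const 3) 4) (pow_ne_zero 4 h3))
  refine ⟨hd.differentiableAt, fun v => ?_⟩
  rw [hd.fderiv]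
  simp only [ContinuousLinearMap.add_apply, ContinuousLinearMap.smul_apply,
    ContinuousLinearMap.coe_smul', ContinuousLinearMap.neg_apply, ContinuousLinearMap.coe_comp',
    Function.comp_apply, ContinuousLinearMap.coe_fst', ContinuousLinearMap.coe_snd',
    Pi.smul_apply, Pi.neg_apply, smul_eq_mul, ℓx, ℓy]
  rw [x_el hp]
  field_simp
  ring

/-- derivative of F2n -/
lemma dF2n : DifferentiableAt ℝ F2n p ∧ ∀ v : R4,
    fderiv ℝ F2n p v = (-24 * p.2.2.2^3 / (sf p * (sf p - 3)^3)) * v.2.2.1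
      + (-12 * p.2.2.2 / (sf p * (sf p - 3))) * v.2.2.2 := by
  have hne : (9:ℝ) - 2*p.2.2.1*p.2.2.2 ≠ 0 := ne_of_gt hp.1
  have hs0 := (sf_pos hp).ne'
  have h3 := sf_ne3 hp
  have hy := y_ne hp
  have hs := hasFDerivAt_sf p hne
  have hd : HasFDerivAt F2n _ p :=
    ((Hpow ℓy.hasFDerivAt 2).const_mul (-12)).mul
      (Hinv (Hpow (hs.sub_const 3) 2) (pow_ne_zero 2 h3))
  refine ⟨hd.differentiableAt, fun v => ?_⟩
  rw [hd.fderiv]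
  simp only [ContinuousLinearMap.add_apply, ContinuousLinearMap.smul_apply,
    ContinuousLinearMap.coe_smul', ContinuousLinearMap.neg_apply, ContinuousLinearMap.coe_comp',
    Function.comp_apply, ContinuousLinearMap.coe_fst', ContinuousLinearMap.coe_snd',
    Pi.smul_apply, Pi.neg_apply, smul_eq_mul, ℓx, ℓy]
  rw [x_el hp]
  field_simp
  ring

lemma fdKP_ev : FdKP =ᶠ[nhds p] Fn :=
  Filter.eventuallyEq_of_mem (isOpen_Udom.mem_nhds hp) (fun q hq => FdKP_eq hq)

lemma pd_e0 : pd e0 FdKP p = 0 := by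
  unfold pd
  rw [(fdKP_ev hp).fderiv_eq, (dFn hp).2 e0]
  simp [e0]

lemma pd_e1 : pd e1 FdKP p = F1n p := by
  unfold pd
  rw [(fdKP_ev hp).fderiv_eq, (dFn hp).2 e1]
  simp [e1]

lemma pd_e2 : pd e2 FdKP p = F2n p := by
  unfold pd
  rw [(fdKP_ev hp).fderiv_eq, (dFn hp).2 e2]
  simp [e2]

lemma pd_e2_ev : pd e2 FdKP =ᶠ[nhds p] F2n :=
  Filter.eventuallyEq_of_mem (isOpen_Udom.mem_nhds hp) (fun q hq => pd_e2 hq)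

lemma XF_pd_e2 : XF FdKP (pd e2 FdKP) p = An p := by
  unfold XF
  rw [(pd_e2_ev hp).fderiv_eq, (dF2n hp).2]
  have hs0 := (sf_pos hp).ne'
  have h3 := sf_ne3 hp
  simp only [XFvec, FdKP_eq hp]
  unfold Fn An F1n
  field_simp
  ring

lemma XF_pd_e2_ev : XF FdKP (pd e2 FdKP) =ᶠ[nhds p] An :=
  Filter.eventuallyEq_of_mem (isOpen_Udom.mem_nhds hp) (fun q hq => XF_pd_e2 hq)

lemma pd_e1_ev : pd e1 FdKP =ᶠ[nhds p] F1n :=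
  Filter.eventuallyEq_of_mem (isOpen_Udom.mem_nhds hp) (fun q hq => pd_e1 hq)

lemma XF_pd_e1 : XF FdKP (pd e1 FdKP) p =
    (-48 * p.2.2.2^5 / (sf p * (sf p - 3)^5)) * p.2.2.2
      + (-24 * p.2.2.2^3 / (sf p * (sf p - 3)^3)) * Fn p := by
  unfold XF
  rw [(pd_e1_ev hp).fderiv_eq, (dF1n hp).2]
  simp only [XFvec, FdKP_eq hp]

lemma XF_XF_pd_e2 : XF FdKP (XF FdKP (pd e2 FdKP)) p =
    -4 * ((-48 * p.2.2.2^5 / (sf p * (sf p - 3)^5)) * p.2.2.2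
      + (-24 * p.2.2.2^3 / (sf p * (sf p - 3)^3)) * Fn p) := by
  have hshow : XF FdKP (XF FdKP (pd e2 FdKP)) p
      = fderiv ℝ (XF FdKP (pd e2 FdKP)) p (XFvec FdKP p) := rfl
  rw [hshow, (XF_pd_e2_ev hp).fderiv_eq]
  have hdiff := (dF1n hp).1
  have hAn : fderiv ℝ An p = (-4 : ℝ) • fderiv ℝ F1n p := by
    unfold An
    exact fderiv_const_mul hdiff (-4)
  rw [hAn]
  simp only [ContinuousLinearMap.smul_apply, smul_eq_mul]
  rw [(dF1n hp).2]
  simp only [XFvec, FdKP_eq hp]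

end facts

end WdKPaux


open WdKPaux in
/-- On the domain where 9 − 2x₁x₂ > 0 and −3+√(9−2x₁x₂) ≠ 0, the Wünschmann
invariant of FdKP vanishes identically. -/
theorem W_vanishes_dKP (p : R4)
    (h1 : 9 - 2 * p.2.2.1 * p.2.2.2 > 0)
    (h2 : -3 + Real.sqrt (9 - 2 * p.2.2.1 * p.2.2.2) ≠ 0) :
    Wun FdKP p = 0 := by
  have hp : p ∈ Udom := by
    refine ⟨h1, fun h => h2 ?_⟩
    have h9 : (9:ℝ) - 2*p.2.2.1*p.2.2.2 = 9 := by rw [mul_assoc, h]; ring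
    rw [h9, show (9:ℝ) = 3^2 by norm_num, Real.sqrt_sq (by norm_num : (0:ℝ) ≤ 3)]
    ring
  have hs0 := (sf_pos hp).ne'
  have h3 := sf_ne3 hp
  unfold Wun
  rw [pd_e0 hp, pd_e1 hp, pd_e2 hp, XF_pd_e1 hp, XF_pd_e2 hp, XF_XF_pd_e2 hp]
  unfold An Fn F1n F2n
  field_simp
  ring
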